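/- Let L > 0 and σ ∈ {1, −1}. (a) Let H₃₄ be the real 4×4 matrix with rows: (−31/(192L⁷), −73/(192L⁷), 9√3σ/(64L⁷), 15√3σ/(64L⁷)); (−73/(192L⁷), −31/(192L⁷), 15√3σ/(64L⁷), 9√3σ/(64L⁷)); (9√3σ/(64L⁷), 15√3σ/(64L⁷), −85/(192L⁷), −163/(192L⁷)); (15√3σ/(64L⁷), 9√3σ/(64L⁷), −163/(192L⁷), −85/(192L⁷)). Then det(H₃₄) = 5/(288 L²⁸). (b) Let H₅₆ be the real 4×4 matrix with rows: (−107/(192L⁷), −29/(192L⁷), 37σ/(64√3 L⁷), 19σ/(64√3 L⁷)); (−29/(192L⁷), −107/(192L⁷), 19σ/(64√3 L⁷), 37σ/(64√3 L⁷)); (37σ/(64√3 L⁷), 19σ/(64√3 L⁷), −11/(64L⁷), 3/(64L⁷)); (19σ/(64√3 L⁷), 37σ/(64√3 L⁷), 3/(64L⁷), −11/(64L⁷)). Then det(H₅₆) = −1/(96 L²⁸). In particular det(H₃₄) = −(5/3)·det(H₅₆) ≠ 0. -/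

import Mathlib

open Real Matrix

lemma det_sym_block (a b c d e f : ℝ) :
    (!![a, b, c, d; b, a, d, c; c, d, e, f; d, c, f, e] : Matrix (Fin 4) (Fin 4) ℝ).det =
      ((a + b) * (e + f) - (c + d) ^ 2) * ((a - b) * (e - f) - (c - d) ^ 2) := by
  simp [Matrix.det_succ_row_zero, Fin.sum_univ_succ, Fin.succAbove,
    Fin.castSucc, Fin.castAdd, Fin.castLE]
  ring

/-- The Hessian matrix `H_{3,4}` at the polar relative equilibria `E₃, E₄`. -/
noncomputable def H34 (L σ : ℝ) : Matrix (Fin 4) (Fin 4) ℝ :=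
  !![-31 / (192 * L ^ 7), -73 / (192 * L ^ 7), 9 * Real.sqrt 3 * σ / (64 * L ^ 7),
      15 * Real.sqrt 3 * σ / (64 * L ^ 7);
     -73 / (192 * L ^ 7), -31 / (192 * L ^ 7), 15 * Real.sqrt 3 * σ / (64 * L ^ 7),
      9 * Real.sqrt 3 * σ / (64 * L ^ 7);
     9 * Real.sqrt 3 * σ / (64 * L ^ 7), 15 * Real.sqrt 3 * σ / (64 * L ^ 7),
      -85 / (192 * L ^ 7), -163 / (192 * L ^ 7);
     15 * Real.sqrt 3 * σ / (64 * L ^ 7), 9 * Real.sqrt 3 * σ / (64 * L ^ 7),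
      -163 / (192 * L ^ 7), -85 / (192 * L ^ 7)]

/-- The Hessian matrix `H_{5,6}` at the polar relative equilibria `E₅, E₆`. -/
noncomputable def H56 (L σ : ℝ) : Matrix (Fin 4) (Fin 4) ℝ :=
  !![-107 / (192 * L ^ 7), -29 / (192 * L ^ 7), 37 * σ / (64 * Real.sqrt 3 * L ^ 7),
      19 * σ / (64 * Real.sqrt 3 * L ^ 7);
     -29 / (192 * L ^ 7), -107 / (192 * L ^ 7), 19 * σ / (64 * Real.sqrt 3 * L ^ 7),
      37 * σ / (64 * Real.sqrt 3 * L ^ 7);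
     37 * σ / (64 * Real.sqrt 3 * L ^ 7), 19 * σ / (64 * Real.sqrt 3 * L ^ 7),
      -11 / (64 * L ^ 7), 3 / (64 * L ^ 7);
     19 * σ / (64 * Real.sqrt 3 * L ^ 7), 37 * σ / (64 * Real.sqrt 3 * L ^ 7),
      3 / (64 * L ^ 7), -11 / (64 * L ^ 7)]

/-- `det(H₃₄) = 5/(288 L²⁸)`, `det(H₅₆) = −1/(96 L²⁸)`; in particular
`det(H₃₄) = −(5/3)·det(H₅₆) ≠ 0`. -/
theorem hessian_determinants_polar (L : ℝ) (hL : 0 < L) (σ : ℝ) (hσ : σ = 1 ∨ σ = -1) :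
    (H34 L σ).det = 5 / (288 * L ^ 28) ∧
    (H56 L σ).det = -1 / (96 * L ^ 28) ∧
    (H34 L σ).det = -(5 / 3) * (H56 L σ).det ∧
    (H34 L σ).det ≠ 0 := by
  have hL7 : (L : ℝ) ^ 7 ≠ 0 := pow_ne_zero _ hL.ne'
  have hL28 : (L : ℝ) ^ 28 ≠ 0 := pow_ne_zero _ hL.ne'
  have hs : Real.sqrt 3 ^ 2 = 3 := Real.sq_sqrt (by norm_num)
  have hs4 : Real.sqrt 3 ^ 4 = 9 := by rw [show (4:ℕ)=2*2 from rfl, pow_mul, hs]; norm_num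
  have hsne : Real.sqrt 3 ≠ 0 := by positivity
  have hσ2 : σ ^ 2 = 1 := by rcases hσ with h | h <;> rw [h] <;> norm_num
  have hσ4 : σ ^ 4 = 1 := by rcases hσ with h | h <;> rw [h] <;> norm_num
  have h34 : (H34 L σ).det = 5 / (288 * L ^ 28) := by
    rw [H34, det_sym_block]
    field_simp
    ring_nf
    rw [hs, hs4, hσ2, hσ4]
    ring
  have h56 : (H56 L σ).det = -1 / (96 * L ^ 28) := by
    rw [H56, det_sym_block]
    field_simp
    ring_nf
    rw [hs, hs4, hσ2, hσ4]
    ring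
  refine ⟨h34, h56, ?_, ?_⟩
  · rw [h34, h56]; field_simp; ring
  · rw [h34]; positivity
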